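/- (Unitary equivalence of the vacuum code with the pure gauge Gauss law code for finite G.) Define Φ : ((L → G) → ℂ) → (X → ℂ) by (Φ f) (a, m) := ((Real.sqrt |G|) ^ |V|)⁻¹ • f (fun ℓ => (m (s ℓ))⁻¹ * a ℓ * m (t ℓ)). Then Φ is a linear isometry (with respect to the standard inner products), and its range is exactly the subspace of gauge-invariant functions {F : X → ℂ | F (g • x) = F x for all g : V → G and all x ∈ X}. Hence the gauge-invariant sector of the matter-coupled theory, which is the physical space of the vacuum code, is unitarily equivalent to the kinematical space (L → G) → ℂ of the pure gauge Gauss law code. -/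
import Mathlib


open Finset

variable {V L : Type*} [Fintype V] [Fintype L] [DecidableEq V] [DecidableEq L]
variable {G : Type*} [CommGroup G] [Fintype G]

/-- The action of a gauge parameter `g : V → G` on combined gauge-field/matter
configurations `X = (L → G) × (V → G)`. -/
def gaugeAct (s t : L → V) (g : V → G) (x : (L → G) × (V → G)) :
    (L → G) × (V → G) :=
  (fun ℓ => g (s ℓ) * x.1 ℓ * (g (t ℓ))⁻¹, fun v => g v * x.2 v)

/-- The map `Φ` embedding the pure gauge kinematical space into the matter-coupled
configuration space. -/
noncomputable def Phi (s t : L → V) (G : Type*) [CommGroup G] [Fintype G] :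
    ((L → G) → ℂ) → (((L → G) × (V → G)) → ℂ) :=
  fun f x => ((Real.sqrt (Fintype.card G) ^ Fintype.card V)⁻¹ : ℝ) •
    f fun ℓ => (x.2 (s ℓ))⁻¹ * x.1 ℓ * x.2 (t ℓ)

/-- Unitary equivalence of the vacuum code with the pure gauge Gauss law code for finite
`G`: `Φ` is a linear isometry whose range is exactly the subspace of gauge-invariant
functions on `X = (L → G) × (V → G)`. -/
theorem vacuum_code_unitary_equivalence (s t : L → V) :
    IsLinearMap ℂ (Phi s t G) ∧
      (∀ f₁ f₂ : (L → G) → ℂ,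
        ∑ x : (L → G) × (V → G),
            (starRingEnd ℂ) (Phi s t G f₁ x) * Phi s t G f₂ x =
          ∑ a : L → G, (starRingEnd ℂ) (f₁ a) * f₂ a) ∧
      Set.range (Phi s t G) =
        {F : ((L → G) × (V → G)) → ℂ |
          ∀ (g : V → G) (x : (L → G) × (V → G)), F (gaugeAct s t g x) = F x} := by
  set c : ℝ := (Real.sqrt (Fintype.card G) ^ Fintype.card V)⁻¹ with hc
  have hGpos : (0:ℝ) < (Fintype.card G : ℝ) := by
    exact_mod_cast Fintype.card_pos
  have hsqrt : Real.sqrt (Fintype.card G) ^ 2 = (Fintype.card G : ℝ) :=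
    Real.sq_sqrt hGpos.le
  have hcpos : 0 < c := by
    rw [hc]
    positivity
  -- bijection lemma
  have key : ∀ (m : V → G) (h : (L → G) → ℂ),
      (∑ a : L → G, h fun ℓ => (m (s ℓ))⁻¹ * a ℓ * m (t ℓ)) = ∑ b : L → G, h b := by
    intro m h
    apply Fintype.sum_bijective (fun a : L → G => fun ℓ => (m (s ℓ))⁻¹ * a ℓ * m (t ℓ))
      ?_ _ _ (fun a => rfl)
    apply Function.bijective_iff_has_inverse.mpr
    refine ⟨fun b ℓ => m (s ℓ) * b ℓ * (m (t ℓ))⁻¹, fun a => ?_, fun b => ?_⟩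
    · funext ℓ; group
    · funext ℓ; group
  refine ⟨⟨fun f g => ?_, fun r f => ?_⟩, fun f₁ f₂ => ?_, ?_⟩
  · funext x; simp [Phi, smul_add]
  · funext x; simp only [Phi, Pi.smul_apply, smul_eq_mul, Complex.real_smul]; ring
  · -- isometry
    rw [Fintype.sum_prod_type_right]
    have step : ∀ m : V → G,
        (∑ a : L → G, (starRingEnd ℂ) (Phi s t G f₁ (a, m)) * Phi s t G f₂ (a, m))
          = (c:ℂ)^2 * ∑ b : L → G, (starRingEnd ℂ) (f₁ b) * f₂ b := by
      intro m
      have : ∀ a : L → G,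
          (starRingEnd ℂ) (Phi s t G f₁ (a, m)) * Phi s t G f₂ (a, m)
            = (c:ℂ)^2 * ((starRingEnd ℂ)
                (f₁ fun ℓ => (m (s ℓ))⁻¹ * a ℓ * m (t ℓ)) *
                f₂ fun ℓ => (m (s ℓ))⁻¹ * a ℓ * m (t ℓ)) := by
        intro a
        simp only [Phi, Complex.real_smul, map_mul, Complex.conj_ofReal]
        ring
      rw [Finset.sum_congr rfl fun a _ => this a, ← Finset.mul_sum,
        key m fun b => (starRingEnd ℂ) (f₁ b) * f₂ b]
    rw [Finset.sum_congr rfl fun m _ => step m, Finset.sum_const]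
    have hcount : (Finset.univ : Finset (V → G)).card = Fintype.card G ^ Fintype.card V := by
      simp [Fintype.card_fun]
    rw [hcount, nsmul_eq_mul, ← mul_assoc]
    have : ((Fintype.card G ^ Fintype.card V : ℕ) : ℂ) * (c:ℂ)^2 = 1 := by
      have : (c:ℝ)^2 = ((Fintype.card G : ℝ) ^ Fintype.card V)⁻¹ := by
        rw [hc, inv_pow, ← pow_mul, mul_comm, pow_mul, hsqrt]
      rw [← Complex.ofReal_pow, this]
      push_cast
      rw [mul_inv_cancel₀ (pow_ne_zero _ (by exact_mod_cast hGpos.ne'))]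
    rw [this, one_mul]
  · -- range
    ext F
    constructor
    · rintro ⟨f, rfl⟩ g x
      simp only [Phi, gaugeAct]
      congr 2
      funext ℓ
      group
    · intro hF
      refine ⟨fun b => (c⁻¹ : ℝ) • F (b, 1), ?_⟩
      funext x
      have h1 : Phi s t G (fun b => (c⁻¹ : ℝ) • F (b, 1)) x
          = F ((fun ℓ => (x.2 (s ℓ))⁻¹ * x.1 ℓ * x.2 (t ℓ)), 1) := by
        simp only [Phi, ← hc, smul_smul]
        rw [mul_inv_cancel₀ hcpos.ne', one_smul]
      rw [h1]
      have h2 := hF (fun v => (x.2 v)⁻¹) x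
      have h3 : gaugeAct s t (fun v => (x.2 v)⁻¹) x
          = ((fun ℓ => (x.2 (s ℓ))⁻¹ * x.1 ℓ * x.2 (t ℓ)), 1) := by
        simp only [gaugeAct]
        refine Prod.ext ?_ ?_
        · funext ℓ; group
        · funext v; simp
      rw [h3] at h2
      exact h2
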